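/- Let Ā be a symmetric real n×n matrix, X a fixed n×d real matrix, and let a, b, c be nonnegative reals with a > 0 and a + b + c = 1. Define f : ℝ^{n×d} → ℝ by f(H) = (1/2)·trace(Hᵀ·(Ā − I_n)·H) − (c/(2a))·‖H − X‖_F². Then f is Fréchet differentiable with gradient (with respect to the Frobenius inner product) G(H) = (Ā − I_n)·H − (c/a)·(H − X), and the gradient-ascent step with step size η = a satisfies H + a·G(H) = a·Ā·H + b·H + c·X. -/

import Mathlib

open Matrix

attribute [local instance] Matrix.frobeniusNormedAddCommGroup Matrix.frobeniusNormedSpace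

/-- The Frobenius inner product space structure on real matrices, compatible with the
Frobenius norm. -/
noncomputable local instance matFrobeniusInner (n d : ℕ) :
    InnerProductSpace ℝ (Matrix (Fin n) (Fin d) ℝ) :=
  { toNormedSpace := Matrix.frobeniusNormedSpace
    inner := fun A B => ∑ i, ∑ j, A i j * B i j
    norm_sq_eq_re_inner := fun A => by
      rw [Matrix.frobenius_norm_def, ← Real.rpow_natCast, ← Real.rpow_mul (by positivity)]
      norm_num [Real.norm_eq_abs, sq_abs, sq]
    conj_inner_symm := fun A B => by
      simp [mul_comm]
    add_left := fun A B C => by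
      simp [add_mul, Finset.sum_add_distrib]
    smul_left := fun A B r => by
      simp [Finset.mul_sum, mul_assoc] }

/-- The Frobenius inner product is `⟨A,B⟩ = trace (Aᵀ B)`. -/
lemma matFrobenius_inner_eq_trace {n d : ℕ} (A B : Matrix (Fin n) (Fin d) ℝ) :
    inner ℝ A B = (Aᵀ * B).trace := by
  simp [Matrix.trace, Matrix.diag, Matrix.mul_apply, inner, Finset.sum_comm (γ := Fin n)]

/-- Left multiplication by a fixed square matrix, as a continuous linear map on
rectangular matrices. -/
noncomputable def matLmulCLM {n d : ℕ} (M : Matrix (Fin n) (Fin n) ℝ) :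
    @ContinuousLinearMap ℝ ℝ _ _ (RingHom.id ℝ) (Matrix (Fin n) (Fin d) ℝ)
      (@UniformSpace.toTopologicalSpace _ (@PseudoMetricSpace.toUniformSpace _
        (@SeminormedAddCommGroup.toPseudoMetricSpace _ (@NormedAddCommGroup.toSeminormedAddCommGroup _
          Matrix.frobeniusNormedAddCommGroup))))
      (@AddCommGroup.toAddCommMonoid _ (@SeminormedAddCommGroup.toAddCommGroup _
        (@NormedAddCommGroup.toSeminormedAddCommGroup _ Matrix.frobeniusNormedAddCommGroup)))
      (Matrix (Fin n) (Fin d) ℝ)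
      (@UniformSpace.toTopologicalSpace _ (@PseudoMetricSpace.toUniformSpace _
        (@SeminormedAddCommGroup.toPseudoMetricSpace _ (@NormedAddCommGroup.toSeminormedAddCommGroup _
          Matrix.frobeniusNormedAddCommGroup))))
      (@AddCommGroup.toAddCommMonoid _ (@SeminormedAddCommGroup.toAddCommGroup _
        (@NormedAddCommGroup.toSeminormedAddCommGroup _ Matrix.frobeniusNormedAddCommGroup)))
      (@NormedSpace.toModule _ _ _ _ Matrix.frobeniusNormedSpace)
      (@NormedSpace.toModule _ _ _ _ Matrix.frobeniusNormedSpace) :=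
  LinearMap.toContinuousLinearMap
    { toFun := fun H => M * H
      map_add' := fun x y => Matrix.mul_add M x y
      map_smul' := fun r x => (Matrix.mul_smul M r x) }

/-- Analytic content of Theorem 3 of the paper: with the Frobenius norm on
`n×d` real matrices, the residual-favored objective
`f(H) = (1/2)·trace(Hᵀ(Ā−I)H) − (c/(2a))·‖H−X‖_F²` is Fréchet differentiable
with gradient `G(H) = (Ā−I)H − (c/a)(H−X)` (w.r.t. the Frobenius inner
product), and the gradient-ascent step with step size `a` is
`H + a·G(H) = a·ĀH + b·H + c·X`, where `a,b,c ≥ 0`, `a > 0`, `a+b+c = 1`. -/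
theorem residual_graphAIN_gradient_ascent_step
    (n d : ℕ) (Abar : Matrix (Fin n) (Fin n) ℝ) (hAbar : Abar.IsSymm)
    (X : Matrix (Fin n) (Fin d) ℝ)
    (a b c : ℝ) (ha : 0 < a) (hb : 0 ≤ b) (hc : 0 ≤ c) (habc : a + b + c = 1) :
    (∀ H : Matrix (Fin n) (Fin d) ℝ,
        ∃ L : Matrix (Fin n) (Fin d) ℝ →L[ℝ] ℝ,
          (∀ K : Matrix (Fin n) (Fin d) ℝ,
              L K = (Kᵀ * ((Abar - 1) * H - (c / a) • (H - X))).trace) ∧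
            HasFDerivAt
              (fun H : Matrix (Fin n) (Fin d) ℝ =>
                (1 / 2 : ℝ) * (Hᵀ * ((Abar - 1) * H)).trace
                  - (c / (2 * a)) * ‖H - X‖ ^ 2) L H) ∧
      ∀ H : Matrix (Fin n) (Fin d) ℝ,
        H + a • ((Abar - 1) * H - (c / a) • (H - X))
          = a • (Abar * H) + b • H + c • X := by
  constructor
  · intro H
    set M := Abar - 1 with hM
    have hMsymm : Mᵀ = M := by
      rw [hM, Matrix.transpose_sub, Matrix.transpose_one, hAbar.eq]
    have h1 : HasFDerivAt (fun H : Matrix (Fin n) (Fin d) ℝ =>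
        (1 / 2 : ℝ) * inner ℝ H ((matLmulCLM M) H))
        ((1/2 : ℝ) • ((fderivInnerCLM ℝ (H, (matLmulCLM M) H)).comp
          ((ContinuousLinearMap.id ℝ _).prod (matLmulCLM M)))) H :=
      ((hasFDerivAt_id H).inner ℝ ((matLmulCLM M).hasFDerivAt)).const_mul _
    have h2 : HasFDerivAt (fun H : Matrix (Fin n) (Fin d) ℝ =>
        (c / (2 * a)) * ‖H - X‖ ^ 2)
        ((c / (2 * a)) • (2 • (innerSL ℝ (H - X)).comp
          (ContinuousLinearMap.id ℝ _))) H := by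
      have := ((hasFDerivAt_id H).sub_const X).norm_sq
      exact this.const_mul _
    refine ⟨_, ?_, (h1.sub h2).congr_fderiv rfl |>.congr_of_eventuallyEq ?_⟩
    · intro K
      show (1 / 2 : ℝ) * (inner ℝ H (matLmulCLM M K) + inner ℝ K (matLmulCLM M H))
        - c / (2 * a) * ((2 : ℕ) • inner ℝ (H - X) K) = _
      rw [matFrobenius_inner_eq_trace, matFrobenius_inner_eq_trace,
        matFrobenius_inner_eq_trace]
      have e1 : (Hᵀ * ((matLmulCLM M) K)).trace = (Kᵀ * (M * H)).trace := by
        show (Hᵀ * (M * K)).trace = _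
        rw [← Matrix.trace_transpose (Hᵀ * (M * K))]
        simp [Matrix.transpose_mul, hMsymm, Matrix.mul_assoc]
      have e2 : (Kᵀ * ((matLmulCLM M) H)).trace = (Kᵀ * (M * H)).trace := rfl
      have e3 : ((H - X)ᵀ * K).trace = (Kᵀ * (H - X)).trace := by
        rw [← Matrix.trace_transpose ((H - X)ᵀ * K)]
        simp [Matrix.transpose_mul]
      rw [Matrix.mul_sub Kᵀ (M * H) ((c / a) • (H - X)), Matrix.trace_sub, Matrix.mul_smul,
        Matrix.trace_smul, smul_eq_mul, nsmul_eq_mul, e1, e2, e3]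
      field_simp
      ring
    · filter_upwards with H
      rw [Pi.sub_apply, matFrobenius_inner_eq_trace]
      rfl
  · intro H
    have hac : a * (c / a) = c := by field_simp
    have hb2 : b = 1 - a - c := by linarith
    rw [Matrix.sub_mul, Matrix.one_mul, smul_sub, smul_smul, hac, hb2, smul_sub,
      sub_smul, sub_smul, one_smul, smul_sub]
    abel
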